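/- Let α, β > -1, n ≥ 2, let ζ_{n,1},…,ζ_{n,n} be the zeros of P_n^{(α,β)} and ζ'_{n,1},…,ζ'_{n,n-1} the zeros of its derivative. Then for any continuous convex function f : [-1,1] → ℝ, (n+α+β+1) Σ_{i=1}^{n} f(ζ_{n,i}) ≤ (n+α+β) Σ_{j=1}^{n-1} f(ζ'_{n,j}) + (n+β) f(1) + (n+α) f(-1). -/

import Mathlib

/-- The Jacobi polynomial `P_n^{(α,β)}`, as a real function, defined via the
Rodrigues formula. -/
noncomputable def jacobiFun (n : ℕ) (α β : ℝ) (x : ℝ) : ℝ :=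
  ((-1 : ℝ) ^ n / (2 ^ n * n.factorial)) * (1 - x) ^ (-α) * (1 + x) ^ (-β) *
    iteratedDeriv n (fun z : ℝ => (1 - z) ^ ((n : ℝ) + α) * (1 + z) ^ ((n : ℝ) + β)) x

open Polynomial

/-- Polynomial part of the k-th derivative in the Rodrigues formula. -/
noncomputable def jq (n : ℕ) (α β : ℝ) : ℕ → ℝ[X]
  | 0 => 1
  | k+1 => (1 - X ^ 2) * derivative (jq n α β k) +
      (C (β - α) - C (2*n + α + β - 2*k) * X) * jq n α β k

lemma jq_zero (n : ℕ) (α β : ℝ) : jq n α β 0 = 1 := rfl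

lemma jq_succ (n : ℕ) (α β : ℝ) (k : ℕ) : jq n α β (k+1) =
    (1 - X ^ 2) * derivative (jq n α β k) +
      (C (β - α) - C (2*n + α + β - 2*k) * X) * jq n α β k := rfl

/-- The ODE satisfied by `jq n α β k`, proved jointly with the derivative recurrence. -/
lemma jq_key (n : ℕ) (α β : ℝ) : ∀ k : ℕ,
      ((1 - X ^ 2) * derivative (derivative (jq n α β k)) +
        (C (β - α) - C (α + β + 2*n - 2*k + 2) * X) * derivative (jq n α β k) +
        C (k * (α + β + 2*n - k + 1)) * jq n α β k = 0) ∧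
      (derivative (jq n α β (k+1)) = C (-((k:ℝ)+1) * (2*n + α + β - k)) * jq n α β k) := by
    intro k
    induction k with
    | zero =>
      constructor
      · simp [jq_zero]
      · rw [jq_succ, jq_zero]
        simp [derivative_sub, derivative_mul]
    | succ k ih =>
      obtain ⟨hode, hder⟩ := ih
      have hder2 : derivative (derivative (jq n α β (k+1))) =
          C (-((k:ℝ)+1) * (2*n + α + β - k)) * derivative (jq n α β k) := by
        rw [hder, derivative_mul, derivative_C, zero_mul, zero_add]
      have hode1 : (1 - X ^ 2) * derivative (derivative (jq n α β (k+1))) +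
          (C (β - α) - C (α + β + 2*n - 2*(k+1:ℕ) + 2) * X) * derivative (jq n α β (k+1)) +
          C ((k+1:ℕ) * (α + β + 2*n - (k+1:ℕ) + 1)) * jq n α β (k+1) = 0 := by
        rw [hder2, hder, jq_succ]
        push_cast
        ring_nf
        simp only [map_add, map_sub, map_mul, map_neg, map_pow, map_one, map_ofNat, map_natCast]
        ring
      refine ⟨hode1, ?_⟩
      -- derivative recurrence at k+1, using hode1
      rw [jq_succ n α β (k+1)]
      simp only [derivative_add, derivative_mul, derivative_sub, derivative_one,
        derivative_X_pow, derivative_C, derivative_X]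
      push_cast at hode1 ⊢
      simp only [map_add, map_sub, map_mul, map_neg, map_pow, map_one, map_ofNat,
        map_natCast] at hode1 ⊢
      linear_combination hode1

lemma jq_ode (n : ℕ) (α β : ℝ) (k : ℕ) :
    (1 - X ^ 2) * derivative (derivative (jq n α β k)) +
      (C (β - α) - C (α + β + 2*n - 2*k + 2) * X) * derivative (jq n α β k) +
      C (k * (α + β + 2*n - k + 1)) * jq n α β k = 0 := (jq_key n α β k).1

lemma jq_deriv (n : ℕ) (α β : ℝ) (k : ℕ) :
    derivative (jq n α β (k+1)) = C (-((k:ℝ)+1) * (2*n + α + β - k)) * jq n α β k :=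
  (jq_key n α β k).2

lemma jq_natDegree_le (n : ℕ) (α β : ℝ) : ∀ k, natDegree (jq n α β k) ≤ k := by
  intro k
  induction k with
  | zero => simp [jq_zero]
  | succ k ih =>
    rw [jq_succ]
    refine (natDegree_add_le _ _).trans (max_le ?_ ?_)
    · rcases Nat.eq_zero_or_pos k with hk | hk
      · subst hk
        rw [jq_zero]
        simp
      · refine (natDegree_mul_le).trans ?_
        have h1 : natDegree (1 - X ^ 2 : ℝ[X]) ≤ 2 := by
          refine (natDegree_sub_le _ _).trans ?_
          simp [natDegree_X_pow]
        have h2 : natDegree (derivative (jq n α β k)) ≤ k - 1 :=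
          (natDegree_derivative_le _).trans (Nat.sub_le_sub_right ih 1)
        omega
    · refine (natDegree_mul_le).trans ?_
      have h0 : natDegree (C (2*(n:ℝ) + α + β - 2*k) * X) ≤ 1 :=
        (natDegree_C_mul_le _ _).trans natDegree_X_le
      have h1 : natDegree (C (β - α) - C (2*(n:ℝ) + α + β - 2*k) * X) ≤ 1 :=
        (natDegree_sub_le _ _).trans (max_le (by simp) h0)
      omega

lemma jq_const_pos (n : ℕ) (α β : ℝ) (hα : -1 < α) (hβ : -1 < β) (hn : 1 ≤ n)
    {k : ℕ} (hk : k + 1 ≤ n) : 0 < 2*(n:ℝ) + α + β - k := by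
  have h1 : (k : ℝ) + 1 ≤ n := by exact_mod_cast hk
  nlinarith [hα, hβ, h1]

lemma jq_natDegree (n : ℕ) (α β : ℝ) (hα : -1 < α) (hβ : -1 < β) (hn : 1 ≤ n) :
    ∀ k, k ≤ n → natDegree (jq n α β k) = k ∧ jq n α β k ≠ 0 := by
  intro k
  induction k with
  | zero => intro _; simp [jq_zero]
  | succ k ih =>
    intro hk
    obtain ⟨hdeg, hne⟩ := ih (by omega)
    have hc : (-((k:ℝ)+1) * (2*n + α + β - k)) ≠ 0 := by
      have h1 := jq_const_pos n α β hα hβ hn hk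
      have h2 : (0:ℝ) < (k:ℝ) + 1 := by positivity
      nlinarith
    have hderne : derivative (jq n α β (k+1)) ≠ 0 := by
      rw [jq_deriv]
      exact mul_ne_zero (by rwa [Ne, C_eq_zero]) hne
    have hndne : natDegree (jq n α β (k+1)) ≠ 0 := by
      intro h
      exact hderne (derivative_of_natDegree_zero h)
    have hlt : natDegree (derivative (jq n α β (k+1))) < natDegree (jq n α β (k+1)) :=
      natDegree_derivative_lt hndne
    rw [jq_deriv, natDegree_C_mul hc, hdeg] at hlt
    have hle := jq_natDegree_le n α β (k+1)
    constructor
    · omega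
    · intro h
      rw [h] at hndne
      simp at hndne

lemma jq_iteratedDeriv (n : ℕ) (α β : ℝ) : ∀ k : ℕ, ∀ x ∈ Set.Ioo (-1:ℝ) 1,
    iteratedDeriv k (fun z : ℝ => (1 - z) ^ ((n:ℝ) + α) * (1 + z) ^ ((n:ℝ) + β)) x =
      (1 - x) ^ ((n:ℝ) + α - k) * (1 + x) ^ ((n:ℝ) + β - k) * eval x (jq n α β k) := by
  intro k
  induction k with
  | zero =>
    intro x _
    simp [jq_zero]
  | succ k ih =>
    intro x hx
    have h1x : (0:ℝ) < 1 - x := by linarith [hx.2]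
    have h2x : (0:ℝ) < 1 + x := by linarith [hx.1]
    have heq : iteratedDeriv (k+1) (fun z : ℝ => (1 - z) ^ ((n:ℝ) + α) * (1 + z) ^ ((n:ℝ) + β)) x
        = deriv (fun y => (1 - y) ^ ((n:ℝ) + α - k) * (1 + y) ^ ((n:ℝ) + β - k) *
            eval y (jq n α β k)) x := by
      rw [iteratedDeriv_succ]
      exact Filter.EventuallyEq.deriv_eq <|
        Filter.eventuallyEq_of_mem (isOpen_Ioo.mem_nhds hx) ih
    have hd1 : HasDerivAt (fun y : ℝ => (1 - y) ^ ((n:ℝ) + α - k))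
        ((-1) * ((n:ℝ) + α - k) * (1 - x) ^ ((n:ℝ) + α - k - 1)) x :=
      ((hasDerivAt_id x).const_sub 1).rpow_const (Or.inl h1x.ne')
    have hd2 : HasDerivAt (fun y : ℝ => (1 + y) ^ ((n:ℝ) + β - k))
        (1 * ((n:ℝ) + β - k) * (1 + x) ^ ((n:ℝ) + β - k - 1)) x :=
      ((hasDerivAt_id x).const_add 1).rpow_const (Or.inl h2x.ne')
    have hd3 : HasDerivAt (fun y : ℝ => eval y (jq n α β k))
        (eval x (derivative (jq n α β k))) x := Polynomial.hasDerivAt _ x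
    have hD := ((hd1.mul hd2).mul hd3).deriv
    rw [heq, show (fun y => (1 - y) ^ ((n:ℝ) + α - k) * (1 + y) ^ ((n:ℝ) + β - k) *
        eval y (jq n α β k)) = ((fun y : ℝ => (1 - y) ^ ((n:ℝ) + α - k)) *
        fun y : ℝ => (1 + y) ^ ((n:ℝ) + β - k)) * fun y => eval y (jq n α β k) from rfl,
      hD, jq_succ]
    simp only [Pi.mul_apply]
    have e1 : (1 - x) ^ ((n:ℝ) + α - (k+1:ℕ)) = (1 - x) ^ ((n:ℝ) + α - k) / (1 - x) := by
      push_cast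
      rw [show (n:ℝ) + α - (k+1) = ((n:ℝ) + α - k) - 1 by ring, Real.rpow_sub_one h1x.ne']
    have e2 : (1 + x) ^ ((n:ℝ) + β - (k+1:ℕ)) = (1 + x) ^ ((n:ℝ) + β - k) / (1 + x) := by
      push_cast
      rw [show (n:ℝ) + β - (k+1) = ((n:ℝ) + β - k) - 1 by ring, Real.rpow_sub_one h2x.ne']
    have e3 : (1 - x) ^ ((n:ℝ) + α - k - 1) = (1 - x) ^ ((n:ℝ) + α - k) / (1 - x) :=
      Real.rpow_sub_one h1x.ne' _
    have e4 : (1 + x) ^ ((n:ℝ) + β - k - 1) = (1 + x) ^ ((n:ℝ) + β - k) / (1 + x) :=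
      Real.rpow_sub_one h2x.ne' _
    rw [e1, e2, e3, e4]
    simp only [eval_add, eval_mul, eval_sub, eval_one, eval_pow, eval_X, eval_C]
    field_simp
    ring

lemma jacobiFun_eq (n : ℕ) (α β : ℝ) {x : ℝ} (hx : x ∈ Set.Ioo (-1:ℝ) 1) :
    jacobiFun n α β x = ((-1 : ℝ) ^ n / (2 ^ n * n.factorial)) * eval x (jq n α β n) := by
  have h1x : (0:ℝ) < 1 - x := by linarith [hx.2]
  have h2x : (0:ℝ) < 1 + x := by linarith [hx.1]
  rw [jacobiFun, jq_iteratedDeriv n α β n x hx]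
  have e1 : (n:ℝ) + α - n = α := by ring
  have e2 : (n:ℝ) + β - n = β := by ring
  rw [e1, e2]
  have e3 : (1 - x) ^ (-α) * (1 - x) ^ α = 1 := by
    rw [← Real.rpow_add h1x]; simp
  have e4 : (1 + x) ^ (-β) * (1 + x) ^ β = 1 := by
    rw [← Real.rpow_add h2x]; simp
  calc ((-1 : ℝ) ^ n / (2 ^ n * n.factorial)) * (1 - x) ^ (-α) * (1 + x) ^ (-β) *
      ((1 - x) ^ α * (1 + x) ^ β * eval x (jq n α β n))
      = ((-1 : ℝ) ^ n / (2 ^ n * n.factorial)) * (((1 - x) ^ (-α) * (1 - x) ^ α) *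
        ((1 + x) ^ (-β) * (1 + x) ^ β) * eval x (jq n α β n)) := by ring
    _ = _ := by rw [e3, e4]; ring

lemma jacobiFun_deriv (n : ℕ) (α β : ℝ) {x : ℝ} (hx : x ∈ Set.Ioo (-1:ℝ) 1) :
    deriv (jacobiFun n α β) x =
      ((-1 : ℝ) ^ n / (2 ^ n * n.factorial)) * eval x (derivative (jq n α β n)) := by
  have heq : deriv (jacobiFun n α β) x =
      deriv (fun y => ((-1 : ℝ) ^ n / (2 ^ n * n.factorial)) * eval y (jq n α β n)) x :=
    Filter.EventuallyEq.deriv_eq <| Filter.eventuallyEq_of_mem (isOpen_Ioo.mem_nhds hx)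
      (fun y hy => jacobiFun_eq n α β hy)
  rw [heq]
  exact (((Polynomial.hasDerivAt (jq n α β n) x)).const_mul _).deriv

lemma jacobi_c0_ne (n : ℕ) : ((-1 : ℝ) ^ n / (2 ^ n * n.factorial)) ≠ 0 := by
  apply div_ne_zero
  · exact pow_ne_zero _ (by norm_num)
  · positivity

section RootSums

variable {ι : Type*} [DecidableEq ι] [Fintype ι]

lemma deriv_prod_eq (r : ι → ℝ) (s : Finset ι) :
    derivative (∏ i ∈ s, (X - C (r i))) = ∑ i ∈ s, ∏ l ∈ s.erase i, (X - C (r l)) := by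
  induction s using Finset.induction_on with
  | empty => simp
  | insert a s hnotmem ih =>
    rw [Finset.prod_insert hnotmem, derivative_mul, derivative_X_sub_C, ih,
      Finset.sum_insert hnotmem, Finset.erase_insert hnotmem, one_mul, Finset.mul_sum]
    congr 1
    apply Finset.sum_congr rfl
    intro i hi
    rw [Finset.erase_insert_of_ne (by rintro rfl; exact hnotmem hi),
      Finset.prod_insert (fun h => hnotmem (Finset.mem_of_mem_erase h))]

lemma eval_prod_erase (r : ι → ℝ) {x : ℝ} (hx : ∀ i, x ≠ r i) (i : ι) :
    ∏ l ∈ Finset.univ.erase i, (x - r l) =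
      (x - r i)⁻¹ * ∏ l, (x - r l) := by
  have h := Finset.mul_prod_erase Finset.univ (fun l => x - r l) (Finset.mem_univ i)
  field_simp [sub_ne_zero.2 (hx i)]
  linear_combination h

lemma eval_derivative_factored (a : ℝ) (r : ι → ℝ) {x : ℝ} (hx : ∀ i, x ≠ r i) :
    eval x (derivative (C a * ∏ i, (X - C (r i)))) =
      eval x (C a * ∏ i, (X - C (r i))) * ∑ i, (x - r i)⁻¹ := by
  rw [derivative_C_mul, deriv_prod_eq, eval_mul, eval_C, eval_finset_sum]
  rw [eval_mul, eval_C, eval_prod]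
  simp only [eval_prod, eval_sub, eval_X, eval_C]
  rw [Finset.mul_sum, Finset.mul_sum]
  congr 1
  funext i
  rw [eval_prod_erase r hx i]
  ring

lemma eval_derivative2_factored (a : ℝ) (r : ι → ℝ) {x : ℝ} (hx : ∀ i, x ≠ r i) :
    eval x (derivative (derivative (C a * ∏ i, (X - C (r i))))) =
      eval x (C a * ∏ i, (X - C (r i))) *
        ((∑ i, (x - r i)⁻¹) ^ 2 - ∑ i, ((x - r i)⁻¹) ^ 2) := by
  have hprod : ∀ i : ι, ∀ m ∈ Finset.univ.erase i,
      ∏ l ∈ (Finset.univ.erase i).erase m, (x - r l)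
        = (x - r m)⁻¹ * ((x - r i)⁻¹ * ∏ l, (x - r l)) := by
    intro i m hm
    have h := Finset.mul_prod_erase (Finset.univ.erase i) (fun l => x - r l) hm
    have h2 := eval_prod_erase r hx i
    have hm' : x - r m ≠ 0 := sub_ne_zero.2 (hx m)
    rw [h2] at h
    field_simp [hm', sub_ne_zero.2 (hx i)] at h ⊢
    linear_combination h
  rw [derivative_C_mul, derivative_C_mul, deriv_prod_eq, derivative_sum]
  have hinner : ∀ i ∈ (Finset.univ : Finset ι),
      derivative (∏ l ∈ Finset.univ.erase i, (X - C (r l))) =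
        ∑ m ∈ Finset.univ.erase i, ∏ l ∈ (Finset.univ.erase i).erase m, (X - C (r l)) :=
    fun i _ => deriv_prod_eq r _
  rw [Finset.sum_congr rfl hinner, eval_mul, eval_C, eval_finset_sum]
  have heval : ∀ i ∈ (Finset.univ : Finset ι),
      eval x (∑ m ∈ Finset.univ.erase i, ∏ l ∈ (Finset.univ.erase i).erase m, (X - C (r l)))
        = (x - r i)⁻¹ * (∏ l, (x - r l)) * ((∑ l, (x - r l)⁻¹) - (x - r i)⁻¹) := by
    intro i _
    rw [eval_finset_sum]
    have : ∀ m ∈ Finset.univ.erase i,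
        eval x (∏ l ∈ (Finset.univ.erase i).erase m, (X - C (r l)))
          = (x - r m)⁻¹ * ((x - r i)⁻¹ * ∏ l, (x - r l)) := by
      intro m hm
      rw [eval_prod]
      simp only [eval_sub, eval_X, eval_C]
      exact hprod i m hm
    rw [Finset.sum_congr rfl this, ← Finset.sum_mul,
      Finset.sum_erase_eq_sub (Finset.mem_univ i)]
    ring
  rw [Finset.sum_congr rfl heval]
  have expand : ∀ i ∈ (Finset.univ : Finset ι),
      ((x - r i)⁻¹ * ∏ l, (x - r l)) * ((∑ l, (x - r l)⁻¹) - (x - r i)⁻¹)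
        = (x - r i)⁻¹ * ((∏ l, (x - r l)) * (∑ l, (x - r l)⁻¹))
          - ((x - r i)⁻¹)^2 * ∏ l, (x - r l) := fun i _ => by ring
  rw [Finset.sum_congr rfl expand, Finset.sum_sub_distrib, ← Finset.sum_mul, ← Finset.sum_mul,
    eval_mul, eval_C, eval_prod]
  simp only [eval_sub, eval_X, eval_C]
  ring

lemma eval_derivative_at_root (a : ℝ) (ha : a ≠ 0) (r : ι → ℝ)
    (hinj : Function.Injective r) (i : ι) :
    eval (r i) (derivative (C a * ∏ l, (X - C (r l)))) ≠ 0 := by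
  rw [derivative_C_mul, deriv_prod_eq, eval_mul, eval_C, eval_finset_sum]
  rw [Finset.sum_eq_single i (fun t _ hti => by
    rw [eval_prod]
    exact Finset.prod_eq_zero (Finset.mem_erase.2 ⟨Ne.symm hti, Finset.mem_univ i⟩) (by simp))
    (fun h => absurd (Finset.mem_univ i) h)]
  apply mul_ne_zero ha
  rw [eval_prod]
  refine Finset.prod_ne_zero_iff.2 fun l hl => ?_
  simp only [eval_sub, eval_X, eval_C]
  exact sub_ne_zero.2 fun h => (Finset.mem_erase.1 hl).1 (hinj h.symm)

end RootSums

lemma factor_of_roots {m : ℕ} (hm : 0 < m) (p : ℝ[X]) (r : Fin m → ℝ)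
    (hinj : Function.Injective r) (hdeg : p.natDegree = m) (hp : p ≠ 0)
    (hroots : ∀ i, p.eval (r i) = 0) :
    p = C p.leadingCoeff * ∏ i, (X - C (r i)) := by
  set Q : ℝ[X] := ∏ i, (X - C (r i)) with hQ
  have hQmonic : Q.Monic := monic_prod_of_monic _ _ (fun i _ => monic_X_sub_C _)
  have hQdeg : Q.natDegree = m := by
    rw [hQ, natDegree_prod _ _ (fun i _ => X_sub_C_ne_zero _)]
    simp [natDegree_X_sub_C]
  have hcoeff : (p - C p.leadingCoeff * Q).coeff m = 0 := by
    rw [coeff_sub, coeff_C_mul, ← hdeg, coeff_natDegree, hdeg, ← hQdeg,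
      hQmonic.coeff_natDegree]
    ring
  have hdegle : (p - C p.leadingCoeff * Q).natDegree ≤ m := by
    refine (natDegree_sub_le _ _).trans (max_le (le_of_eq hdeg) ?_)
    exact (natDegree_C_mul_le _ _).trans (le_of_eq hQdeg)
  have hdeglt : (p - C p.leadingCoeff * Q).natDegree < m := by
    rcases eq_or_ne (p - C p.leadingCoeff * Q) 0 with h0 | h0
    · rw [h0]; simpa using hm
    · rcases lt_or_eq_of_le hdegle with h | h
      · exact h
      · exfalso
        apply leadingCoeff_ne_zero.2 h0
        rw [leadingCoeff, h, hcoeff]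
  have hzero : p - C p.leadingCoeff * Q = 0 := by
    refine Polynomial.eq_zero_of_natDegree_lt_card_of_eval_eq_zero _ hinj ?_ ?_
    · intro i
      rw [eval_sub, hroots i, eval_mul, hQ, eval_prod]
      rw [Finset.prod_eq_zero (Finset.mem_univ i) (by simp)]
      ring
    · simpa using hdeglt
  exact sub_eq_zero.1 hzero

set_option maxHeartbeats 3200000 in
theorem jacobi_zeros_derivative_majorization (α β : ℝ) (hα : -1 < α) (hβ : -1 < β)
    (n : ℕ) (hn : 2 ≤ n) (ζ : Fin n → ℝ) (ζ' : Fin (n - 1) → ℝ)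
    (hζmem : ∀ i, ζ i ∈ Set.Ioo (-1 : ℝ) 1)
    (hζroot : ∀ i, jacobiFun n α β (ζ i) = 0)
    (hζinj : Function.Injective ζ)
    (hζ'mem : ∀ j, ζ' j ∈ Set.Ioo (-1 : ℝ) 1)
    (hζ'root : ∀ j, deriv (jacobiFun n α β) (ζ' j) = 0)
    (hζ'inj : Function.Injective ζ')
    (f : ℝ → ℝ) (hconv : ConvexOn ℝ (Set.Icc (-1 : ℝ) 1) f)
    (hcont : ContinuousOn f (Set.Icc (-1 : ℝ) 1)) :
    (n + α + β + 1) * ∑ i, f (ζ i) ≤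
      (n + α + β) * ∑ j, f (ζ' j) + (n + β) * f 1 + (n + α) * f (-1) := by
  have hn1 : 1 ≤ n := by omega
  have hc0 := jacobi_c0_ne n
  set c0 : ℝ := ((-1 : ℝ) ^ n / (2 ^ n * n.factorial)) with hc0def
  set q : ℝ[X] := jq n α β n with hqdef
  set K : ℝ := (n:ℝ) * ((n:ℝ) + α + β + 1) with hKdef
  have hnR : (2:ℝ) ≤ (n:ℝ) := by exact_mod_cast hn
  have hKpos : 0 < K := by rw [hKdef]; nlinarith
  have hα1 : (0:ℝ) < α + 1 := by linarith
  have hβ1 : (0:ℝ) < β + 1 := by linarith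
  -- basic facts about q
  obtain ⟨hqdeg, hqne⟩ := jq_natDegree n α β hα hβ hn1 n le_rfl
  have hq'eq : derivative q = C (-(((n-1:ℕ):ℝ)+1) * (2*n + α + β - (n-1:ℕ))) * jq n α β (n-1) := by
    rw [hqdef, show n = (n-1)+1 by omega, jq_deriv]
    norm_num
  have hcder : (-(((n-1:ℕ):ℝ)+1) * (2*(n:ℝ) + α + β - (n-1:ℕ))) ≠ 0 := by
    have h1 := jq_const_pos n α β hα hβ hn1 (k := n-1) (by omega)
    have h2 : (0:ℝ) < ((n-1:ℕ):ℝ) + 1 := by positivity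
    nlinarith
  obtain ⟨hq1deg', hq1ne'⟩ := jq_natDegree n α β hα hβ hn1 (n-1) (by omega)
  have hq'deg : (derivative q).natDegree = n - 1 := by
    rw [hq'eq, natDegree_C_mul hcder, hq1deg']
  have hq'ne : derivative q ≠ 0 := by
    rw [hq'eq]
    exact mul_ne_zero (by rwa [Ne, C_eq_zero]) hq1ne'
  -- roots of q and q'
  have hqroot : ∀ i, eval (ζ i) q = 0 := by
    intro i
    have h := hζroot i
    rw [jacobiFun_eq n α β (hζmem i)] at h
    exact (mul_eq_zero.1 h).resolve_left hc0
  have hq'root : ∀ j, eval (ζ' j) (derivative q) = 0 := by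
    intro j
    have h := hζ'root j
    rw [jacobiFun_deriv n α β (hζ'mem j)] at h
    exact (mul_eq_zero.1 h).resolve_left hc0
  -- factorizations
  have hfq : q = C q.leadingCoeff * ∏ i, (X - C (ζ i)) :=
    factor_of_roots (by omega) q ζ hζinj hqdeg hqne hqroot
  have hfq' : derivative q = C (derivative q).leadingCoeff * ∏ j, (X - C (ζ' j)) :=
    factor_of_roots (by omega) _ ζ' hζ'inj hq'deg hq'ne hq'root
  have hlcne : q.leadingCoeff ≠ 0 := leadingCoeff_ne_zero.2 hqne
  have hlc'ne : (derivative q).leadingCoeff ≠ 0 := leadingCoeff_ne_zero.2 hq'ne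
  -- the derivative of q does not vanish at the ζ i (simple roots)
  have hsimple : ∀ i, eval (ζ i) (derivative q) ≠ 0 := by
    intro i
    have h := eval_derivative_at_root q.leadingCoeff hlcne ζ hζinj i
    rwa [← hfq] at h
  have hne : ∀ i j, ζ i ≠ ζ' j := by
    intro i j h
    exact hsimple i (h ▸ hq'root j)
  -- eval of q at points distinct from all ζ i is nonzero
  have hqeval_ne : ∀ x : ℝ, (∀ i, x ≠ ζ i) → eval x q ≠ 0 := by
    intro x hx
    rw [hfq]
    simp only [eval_mul, eval_C, eval_prod, eval_sub, eval_X]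
    exact mul_ne_zero hlcne (Finset.prod_ne_zero_iff.2 (fun i _ => sub_ne_zero.2 (hx i)))
  -- log-derivative identities
  have logd_q : ∀ x : ℝ, (∀ i, x ≠ ζ i) →
      eval x (derivative q) = eval x q * ∑ i, (x - ζ i)⁻¹ := by
    intro x hx
    conv_lhs => rw [hfq]
    rw [eval_derivative_factored _ _ hx, ← hfq]
  have logd2_q : ∀ x : ℝ, (∀ i, x ≠ ζ i) →
      eval x (derivative (derivative q)) =
        eval x q * ((∑ i, (x - ζ i)⁻¹) ^ 2 - ∑ i, ((x - ζ i)⁻¹) ^ 2) := by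
    intro x hx
    conv_lhs => rw [hfq]
    rw [eval_derivative2_factored _ _ hx, ← hfq]
  have logd_q' : ∀ x : ℝ, (∀ j, x ≠ ζ' j) →
      eval x (derivative (derivative q)) =
        eval x (derivative q) * ∑ j, (x - ζ' j)⁻¹ := by
    intro x hx
    conv_lhs => rw [hfq']
    rw [eval_derivative_factored _ _ hx, ← hfq']
  have logd2_q' : ∀ x : ℝ, (∀ j, x ≠ ζ' j) →
      eval x (derivative (derivative (derivative q))) =
        eval x (derivative q) * ((∑ j, (x - ζ' j)⁻¹) ^ 2 - ∑ j, ((x - ζ' j)⁻¹) ^ 2) := by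
    intro x hx
    conv_lhs => rw [hfq']
    rw [eval_derivative2_factored _ _ hx, ← hfq']
  -- the ODE, evaluated
  have hODE : ∀ x : ℝ, (1 - x^2) * eval x (derivative (derivative q)) +
      ((β - α) - (α + β + 2)*x) * eval x (derivative q) + K * eval x q = 0 := by
    intro x
    have h := congrArg (eval x) (jq_ode n α β n)
    simp only [eval_add, eval_mul, eval_sub, eval_one, eval_pow, eval_X, eval_C,
      eval_zero] at h
    rw [hqdef, hKdef]
    linear_combination h
  have hODE3 : ∀ x : ℝ, (1 - x^2) * eval x (derivative (derivative (derivative q))) +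
      ((β - α) - (α + β + 4)*x) * eval x (derivative (derivative q)) +
      (K - (α + β + 2)) * eval x (derivative q) = 0 := by
    intro x
    have h := congrArg (eval x) (congrArg derivative (jq_ode n α β n))
    simp only [derivative_add, derivative_mul, derivative_sub, derivative_one,
      derivative_X_pow, derivative_C, derivative_X, derivative_zero, eval_add, eval_mul,
      eval_sub, eval_one, eval_pow, eval_X, eval_C, eval_zero, eval_natCast] at h
    rw [hqdef, hKdef]
    linear_combination h
  -- pointwise positivity
  have hz1 : ∀ i, (0:ℝ) < 1 - ζ i := fun i => by linarith [(hζmem i).2]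
  have hz2 : ∀ i, (0:ℝ) < 1 + ζ i := fun i => by linarith [(hζmem i).1]
  have hzsq : ∀ i, (0:ℝ) < 1 - (ζ i)^2 := fun i => by nlinarith [hz1 i, hz2 i]
  -- per-i sums over the zeros of the derivative
  set S1 : Fin n → ℝ := fun i => ∑ j, (ζ i - ζ' j)⁻¹ with hS1def
  set S2 : Fin n → ℝ := fun i => ∑ j, ((ζ i - ζ' j)⁻¹)^2 with hS2def
  have hA : ∀ i, (1 - (ζ i)^2) * S1 i = (α+β+2) * ζ i + α - β := by
    intro i
    have h1 := logd_q' (ζ i) (fun j => hne i j)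
    have h2 := hODE (ζ i)
    rw [hqroot i, mul_zero, add_zero, h1] at h2
    have h3 : eval (ζ i) (derivative q) *
        ((1 - (ζ i)^2) * S1 i + ((β - α) - (α+β+2) * ζ i)) = 0 := by
      linear_combination h2
    have h4 := (mul_eq_zero.1 h3).resolve_left (hsimple i)
    linarith
  have hB : ∀ i, (1 - (ζ i)^2) * (S1 i ^ 2 - S2 i)
      = ((α+β+4) * ζ i + α - β) * S1 i + (α+β+2) - K := by
    intro i
    have h1 := logd2_q' (ζ i) (fun j => hne i j)
    have h2 := logd_q' (ζ i) (fun j => hne i j)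
    have h3 := hODE3 (ζ i)
    rw [h1, h2] at h3
    have h4 : eval (ζ i) (derivative q) *
        ((1 - (ζ i)^2) * (S1 i^2 - S2 i)
          - (((α+β+4)*ζ i + α - β) * S1 i + (α+β+2) - K)) = 0 := by
      linear_combination h3
    have h5 := (mul_eq_zero.1 h4).resolve_left (hsimple i)
    linarith
  -- normalization identity (sum of weights)
  have hstar2 : ∀ i, S2 i + (α+1)/(1 - ζ i)^2 + (β+1)/(1 + ζ i)^2 = K / (1 - (ζ i)^2) := by
    intro i
    have h1 := (hzsq i).ne'
    have h2 := (hz1 i).ne'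
    have h3 := (hz2 i).ne'
    have hS1v : S1 i = ((α+β+2) * ζ i + α - β) / (1 - (ζ i)^2) := by
      rw [eq_div_iff h1]
      linarith [hA i]
    have hS2v : S2 i = S1 i^2
        - (((α+β+4)*ζ i + α - β) * S1 i + (α+β+2) - K) / (1 - (ζ i)^2) := by
      have hd : (((α+β+4)*ζ i + α - β) * S1 i + (α+β+2) - K) / (1 - (ζ i)^2)
          = S1 i ^ 2 - S2 i := by
        rw [div_eq_iff h1]
        linarith [hB i]
      rw [hd]
      ring
    rw [hS2v, hS1v]
    field_simp
    ring
  -- column sums at the ζ' j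
  have hT : ∀ j, ∑ i, (1 - (ζ i)^2) * ((ζ' j - ζ i)⁻¹)^2 = K - n := by
    intro j
    have hxj : ∀ i, ζ' j ≠ ζ i := fun i => (hne i j).symm
    have hq0 : eval (ζ' j) q ≠ 0 := hqeval_ne _ hxj
    have hT1 : ∑ i, (ζ' j - ζ i)⁻¹ = 0 := by
      have h := logd_q (ζ' j) hxj
      rw [hq'root j] at h
      exact ((mul_eq_zero.1 h.symm).resolve_left hq0)
    have hT2 : (1 - (ζ' j)^2) * ∑ i, ((ζ' j - ζ i)⁻¹)^2 = K := by
      have h := logd2_q (ζ' j) hxj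
      have h2 := hODE (ζ' j)
      rw [hq'root j, mul_zero, h, hT1] at h2
      have h3 : eval (ζ' j) q *
          ((1 - (ζ' j)^2) * (∑ i, ((ζ' j - ζ i)⁻¹)^2) - K) = 0 := by
        linear_combination -h2
      have h4 := (mul_eq_zero.1 h3).resolve_left hq0
      linarith
    have hpt : ∀ i ∈ (Finset.univ : Finset (Fin n)),
        (1 - (ζ i)^2) * ((ζ' j - ζ i)⁻¹)^2
          = (1 - (ζ' j)^2) * ((ζ' j - ζ i)⁻¹)^2 + 2 * ζ' j * (ζ' j - ζ i)⁻¹ - 1 := by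
      intro i _
      have hzne : ζ' j - ζ i ≠ 0 := sub_ne_zero.2 (hxj i)
      field_simp
      ring
    rw [Finset.sum_congr rfl hpt, Finset.sum_sub_distrib, Finset.sum_add_distrib,
      ← Finset.mul_sum, ← Finset.mul_sum, hT1, mul_zero, add_zero, Finset.sum_const,
      Finset.card_univ, Fintype.card_fin, nsmul_eq_mul, mul_one, hT2]
  -- column sums at the endpoints
  have hx1 : ∀ i, (1:ℝ) ≠ ζ i := fun i => (ne_of_lt (hζmem i).2).symm
  have hxm1 : ∀ i, (-1:ℝ) ≠ ζ i := fun i => (ne_of_gt (hζmem i).1).symm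
  have hTp : ∑ i, (1 + ζ i) / (1 - ζ i) = K/(α+1) - n := by
    have hq0 : eval 1 q ≠ 0 := hqeval_ne _ hx1
    have hT1 : ∑ i, ((1:ℝ) - ζ i)⁻¹ = K / (2*(α+1)) := by
      have h := logd_q 1 hx1
      have h2 := hODE 1
      rw [h] at h2
      have h3 : eval 1 q * ((2*(α+1)) * (∑ i, ((1:ℝ) - ζ i)⁻¹) - K) = 0 := by
        linear_combination -h2
      have h4 := (mul_eq_zero.1 h3).resolve_left hq0
      rw [eq_div_iff (by positivity : (2:ℝ)*(α+1) ≠ 0)]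
      linarith
    have hpt : ∀ i ∈ (Finset.univ : Finset (Fin n)),
        (1 + ζ i)/(1 - ζ i) = 2 * (1 - ζ i)⁻¹ - 1 := by
      intro i _
      field_simp [(hz1 i).ne']
      ring
    rw [Finset.sum_congr rfl hpt, Finset.sum_sub_distrib, ← Finset.mul_sum, hT1,
      Finset.sum_const, Finset.card_univ, Fintype.card_fin, nsmul_eq_mul, mul_one]
    field_simp
  have hTm : ∑ i, (1 - ζ i) / (1 + ζ i) = K/(β+1) - n := by
    have hq0 : eval (-1) q ≠ 0 := hqeval_ne _ hxm1
    have hT1 : ∑ i, ((-1:ℝ) - ζ i)⁻¹ = -(K / (2*(β+1))) := by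
      have h := logd_q (-1) hxm1
      have h2 := hODE (-1)
      rw [h] at h2
      have h3 : eval (-1) q * ((2*(β+1)) * (∑ i, ((-1:ℝ) - ζ i)⁻¹) + K) = 0 := by
        linear_combination h2
      have h4 := (mul_eq_zero.1 h3).resolve_left hq0
      rw [eq_comm, neg_eq_iff_eq_neg, eq_comm, eq_div_iff (by positivity : (2:ℝ)*(β+1) ≠ 0)]
      linarith
    have hpt : ∀ i ∈ (Finset.univ : Finset (Fin n)),
        (1 - ζ i)/(1 + ζ i) = -2 * (-1 - ζ i)⁻¹ - 1 := by
      intro i _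
      have : (-1:ℝ) - ζ i ≠ 0 := by have := hz2 i; intro h; nlinarith
      field_simp [(hz2 i).ne']
      ring
    rw [Finset.sum_congr rfl hpt, Finset.sum_sub_distrib, ← Finset.mul_sum, hT1,
      Finset.sum_const, Finset.card_univ, Fintype.card_fin, nsmul_eq_mul, mul_one]
    field_simp
  -- explicit value of S1
  have hS1v : ∀ i, S1 i = ((α+β+2) * ζ i + α - β) / (1 - (ζ i)^2) := by
    intro i
    rw [eq_div_iff (hzsq i).ne']
    linarith [hA i]
  -- the weights
  set W : Fin n → Fin (n-1) → ℝ := fun i j => (1 - (ζ i)^2) / (K * (ζ i - ζ' j)^2) with hWdef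
  set Wp : Fin n → ℝ := fun i => (α+1) * (1 + ζ i) / (K * (1 - ζ i)) with hWpdef
  set Wm : Fin n → ℝ := fun i => (β+1) * (1 - ζ i) / (K * (1 + ζ i)) with hWmdef
  have hWnn : ∀ i j, 0 ≤ W i j := by
    intro i j
    have h1 := hzsq i
    have h2 : ζ i - ζ' j ≠ 0 := sub_ne_zero.2 (hne i j)
    rw [hWdef]
    positivity
  have hWpnn : ∀ i, 0 ≤ Wp i := by
    intro i
    have h1 := hz1 i; have h2 := hz2 i
    rw [hWpdef]
    positivity
  have hWmnn : ∀ i, 0 ≤ Wm i := by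
    intro i
    have h1 := hz1 i; have h2 := hz2 i
    rw [hWmdef]
    positivity
  -- row sums are one
  have hWrow : ∀ i, (∑ j, W i j) + Wp i + Wm i = 1 := by
    intro i
    have hsplit : ∀ j ∈ (Finset.univ : Finset (Fin (n-1))),
        W i j = (1 - (ζ i)^2)/K * ((ζ i - ζ' j)⁻¹)^2 := by
      intro j _
      have hzne : ζ i - ζ' j ≠ 0 := sub_ne_zero.2 (hne i j)
      rw [hWdef]
      field_simp
    rw [Finset.sum_congr rfl hsplit, ← Finset.mul_sum]
    have hfold : (∑ j, ((ζ i - ζ' j)⁻¹)^2) = S2 i := rfl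
    have hS2v : S2 i = K / (1 - (ζ i)^2) - (α+1)/(1 - ζ i)^2 - (β+1)/(1 + ζ i)^2 := by
      linarith [hstar2 i]
    rw [hfold, hS2v, hWpdef, hWmdef]
    have h1 := (hzsq i).ne'
    have h2 := (hz1 i).ne'
    have h3 := (hz2 i).ne'
    field_simp
    ring
  -- barycenter identity
  have hWbar : ∀ i, (∑ j, W i j * ζ' j) + Wp i * 1 + Wm i * (-1) = ζ i := by
    intro i
    have hsplit : ∀ j ∈ (Finset.univ : Finset (Fin (n-1))),
        W i j * ζ' j = W i j * ζ i - (1 - (ζ i)^2)/K * (ζ i - ζ' j)⁻¹ := by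
      intro j _
      have hzne : ζ i - ζ' j ≠ 0 := sub_ne_zero.2 (hne i j)
      rw [hWdef]
      field_simp
      ring
    rw [Finset.sum_congr rfl hsplit, Finset.sum_sub_distrib, ← Finset.sum_mul,
      ← Finset.mul_sum]
    have hfold : (∑ j, (ζ i - ζ' j)⁻¹) = S1 i := rfl
    have hRowEq : (∑ j, W i j) = 1 - Wp i - Wm i := by linarith [hWrow i]
    rw [hfold, hRowEq, hS1v i, hWpdef, hWmdef]
    have h1 := (hzsq i).ne'
    have h2 := (hz1 i).ne'
    have h3 := (hz2 i).ne'
    field_simp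
    ring
  -- Jensen step
  have hJen : ∀ i, f (ζ i) ≤ (∑ j, W i j * f (ζ' j)) + Wp i * f 1 + Wm i * f (-1) := by
    intro i
    have key := hconv.map_sum_le (t := (Finset.univ : Finset (Fin (n-1) ⊕ Bool)))
      (w := Sum.elim (W i) (fun b => if b then Wp i else Wm i))
      (p := Sum.elim ζ' (fun b => if b then 1 else -1))
      (by rintro (j|b) -
          · simpa using hWnn i j
          · cases b
            · simpa using hWmnn i
            · simpa using hWpnn i)
      (by rw [Fintype.sum_sum_type]
          norm_num [Fintype.sum_bool]
          linarith [hWrow i])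
      (by rintro (j|b) -
          · exact Set.Ioo_subset_Icc_self (hζ'mem j)
          · cases b <;> norm_num [Set.mem_Icc])
    have harg : (∑ x : Fin (n-1) ⊕ Bool, Sum.elim (W i) (fun b => if b then Wp i else Wm i) x
        • Sum.elim ζ' (fun b => if b then 1 else -1) x) = ζ i := by
      rw [Fintype.sum_sum_type]
      norm_num [Fintype.sum_bool, smul_eq_mul]
      linarith [hWbar i]
    rw [harg] at key
    refine key.trans (le_of_eq ?_)
    rw [Fintype.sum_sum_type]
    norm_num [Fintype.sum_bool, smul_eq_mul]
    ring
  -- column sums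
  have hcol : ∀ j, ∑ i, W i j = (K - n)/K := by
    intro j
    have hsplit : ∀ i ∈ (Finset.univ : Finset (Fin n)),
        W i j = (1 - (ζ i)^2) * ((ζ' j - ζ i)⁻¹)^2 / K := by
      intro i _
      have hzne : ζ i - ζ' j ≠ 0 := sub_ne_zero.2 (hne i j)
      rw [hWdef, show ((ζ' j - ζ i)⁻¹)^2 = ((ζ i - ζ' j)^2)⁻¹ by
        rw [inv_pow]; congr 1; ring]
      simp only [div_eq_mul_inv, mul_inv]
      ring
    rw [Finset.sum_congr rfl hsplit, ← Finset.sum_div, hT j]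
  have hcolp : ∑ i, Wp i = (K - n*(α+1))/K := by
    have hsplit : ∀ i ∈ (Finset.univ : Finset (Fin n)),
        Wp i = (α+1)/K * ((1 + ζ i)/(1 - ζ i)) := by
      intro i _
      have h2 := (hz1 i).ne'
      rw [hWpdef]
      field_simp
    rw [Finset.sum_congr rfl hsplit, ← Finset.mul_sum, hTp]
    field_simp
  have hcolm : ∑ i, Wm i = (K - n*(β+1))/K := by
    have hsplit : ∀ i ∈ (Finset.univ : Finset (Fin n)),
        Wm i = (β+1)/K * ((1 - ζ i)/(1 + ζ i)) := by
      intro i _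
      have h2 := (hz2 i).ne'
      rw [hWmdef]
      field_simp
    rw [Finset.sum_congr rfl hsplit, ← Finset.mul_sum, hTm]
    field_simp
  -- assemble
  have hsum : ∑ i, f (ζ i) ≤
      (K - n)/K * ∑ j, f (ζ' j) + (K - n*(α+1))/K * f 1 + (K - n*(β+1))/K * f (-1) := by
    refine (Finset.sum_le_sum (fun i (_ : i ∈ Finset.univ) => hJen i)).trans (le_of_eq ?_)
    rw [Finset.sum_add_distrib, Finset.sum_add_distrib, Finset.sum_comm,
      ← Finset.sum_mul, ← Finset.sum_mul, hcolp, hcolm]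
    congr 1
    congr 1
    rw [Finset.mul_sum]
    refine Finset.sum_congr rfl fun j _ => ?_
    rw [← Finset.sum_mul, hcol j]
  have hpos : (0:ℝ) < (n:ℝ) + α + β + 1 := by linarith
  have hmul := mul_le_mul_of_nonneg_left hsum hpos.le
  refine hmul.trans (le_of_eq ?_)
  have hnne : (n:ℝ) ≠ 0 := by linarith
  rw [hKdef]
  field_simp
  ring
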